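/- arXiv:2106.10388 — 3 statements merged into one kernel-verified Lean document; each statement's English description precedes it below -/
import Mathlib

section
/- For every integer d ≥ 3, the equation ∏_{i=0}^{2} (1 − (1−p)^{⌊(d+i)/3⌋}) = 2 − ∑_{i=0}^{2} (1−p)^{⌊(d+i)/3⌋} has a unique solution p in the open interval (0,1). -/
lemma aux_unique (a b c : ℕ) (ha : a ≠ 0) (hb : b ≠ 0) (hc : c ≠ 0) :
    ∃! q : ℝ, q ∈ Set.Ioo (0 : ℝ) 1 ∧
      q ^ (a + b) + q ^ (a + c) + q ^ (b + c) - q ^ (a + b + c) = 1 := by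
  set g : ℝ → ℝ := fun q => q ^ (a + b) + q ^ (a + c) + q ^ (b + c) - q ^ (a + b + c) with hg
  have hmono : StrictMonoOn g (Set.Icc 0 1) := by
    intro x hx y hy hxy
    simp only [Set.mem_Icc] at hx hy
    have hgx : g x = x ^ a * x ^ b + x ^ c * (1 - (1 - x ^ a) * (1 - x ^ b)) := by
      simp only [hg, pow_add]; ring
    have hgy : g y = y ^ a * y ^ b + y ^ c * (1 - (1 - y ^ a) * (1 - y ^ b)) := by
      simp only [hg, pow_add]; ring
    rw [hgx, hgy]
    have h1 : x ^ a < y ^ a := pow_lt_pow_left₀ hxy hx.1 ha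
    have h2 : x ^ b < y ^ b := pow_lt_pow_left₀ hxy hx.1 hb
    have h3 : x ^ c ≤ y ^ c := pow_le_pow_left₀ hx.1 hxy.le c
    have h4 : (0:ℝ) ≤ x ^ a := pow_nonneg hx.1 a
    have h5 : (0:ℝ) ≤ x ^ b := pow_nonneg hx.1 b
    have h6 : (0:ℝ) ≤ x ^ c := pow_nonneg hx.1 c
    have h7 : y ^ a ≤ 1 := pow_le_one₀ (le_trans hx.1 hxy.le) hy.2
    have h8 : y ^ b ≤ 1 := pow_le_one₀ (le_trans hx.1 hxy.le) hy.2
    have h9 : (0:ℝ) ≤ y ^ c := pow_nonneg (le_trans hx.1 hxy.le) c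
    have t1 : x ^ a * x ^ b < y ^ a * y ^ b := mul_lt_mul'' h1 h2 h4 h5
    have hTx : (1 - y ^ a) * (1 - y ^ b) ≤ (1 - x ^ a) * (1 - x ^ b) :=
      mul_le_mul (sub_le_sub_left h1.le 1) (sub_le_sub_left h2.le 1)
        (sub_nonneg.2 h8) (sub_nonneg.2 (h1.le.trans h7))
    have hTx1 : (1 - x ^ a) * (1 - x ^ b) ≤ 1 := by nlinarith
    have t2 : x ^ c * (1 - (1 - x ^ a) * (1 - x ^ b)) ≤
        y ^ c * (1 - (1 - y ^ a) * (1 - y ^ b)) :=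
      mul_le_mul h3 (sub_le_sub_left hTx 1) (sub_nonneg.2 hTx1) h9
    linarith
  have hcont : Continuous g := by
    simp only [hg]; fun_prop
  have hg0 : g 0 = 0 := by
    simp [hg, zero_pow, Nat.add_eq_zero, ha, hb, hc]
  have hg1 : g 1 = 2 := by norm_num [hg]
  have hsub := intermediate_value_Ioo (by norm_num : (0:ℝ) ≤ 1) hcont.continuousOn
  rw [hg0, hg1] at hsub
  obtain ⟨q, hq, hgq⟩ := hsub (by norm_num : (1:ℝ) ∈ Set.Ioo (0:ℝ) 2)
  refine ⟨q, ⟨hq, hgq⟩, ?_⟩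
  rintro q' ⟨hq', hgq'⟩
  have hgq'' : g q' = 1 := hgq'
  exact hmono.injOn (Set.Ioo_subset_Icc_self hq') (Set.Ioo_subset_Icc_self hq)
    (hgq''.trans hgq.symm)

theorem unique_solution_triangular_equation (d : ℕ) (hd : 3 ≤ d) :
    ∃! p : ℝ, p ∈ Set.Ioo (0 : ℝ) 1 ∧
      (∏ i ∈ Finset.range 3, (1 - (1 - p) ^ ((d + i) / 3))) =
        2 - ∑ i ∈ Finset.range 3, (1 - p) ^ ((d + i) / 3) := by
  set a := d / 3 with hA
  set b := (d + 1) / 3 with hB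
  set c := (d + 2) / 3 with hC
  have ha : a ≠ 0 := by simp only [hA]; omega
  have hb : b ≠ 0 := by simp only [hB]; omega
  have hc : c ≠ 0 := by simp only [hC]; omega
  have key : ∀ p : ℝ,
      ((∏ i ∈ Finset.range 3, (1 - (1 - p) ^ ((d + i) / 3))) =
        2 - ∑ i ∈ Finset.range 3, (1 - p) ^ ((d + i) / 3)) ↔
      (1 - p) ^ (a + b) + (1 - p) ^ (a + c) + (1 - p) ^ (b + c)
        - (1 - p) ^ (a + b + c) = 1 := by
    intro p
    have hd0 : d + 0 = d := by ring
    rw [Finset.prod_range_succ, Finset.prod_range_succ, Finset.prod_range_one,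
      Finset.sum_range_succ, Finset.sum_range_succ, Finset.sum_range_one, hd0,
      ← hA, ← hB, ← hC]
    simp only [pow_add]
    constructor <;> intro h <;> linear_combination h
  obtain ⟨q, ⟨hq, hgq⟩, huniq⟩ := aux_unique a b c ha hb hc
  refine ⟨1 - q, ⟨⟨by simp [hq.2], by simp [hq.1]⟩, ?_⟩, ?_⟩
  · rw [key]
    simpa using hgq
  · rintro p ⟨hp, hep⟩
    have := huniq (1 - p) ⟨⟨by simp [hp.2], by simp [hp.1]⟩, by
      have := (key p).1 hep; simpa using this⟩
    linarith
end

section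
/- For any c ∈ (0,1) and integer d ≥ 1, the equation p = c(p + (1−p)^{2d/(2d−1)}) has a unique solution in (0,1). -/
theorem crossover_fixed_point_site (d : ℕ) (hd : 1 ≤ d) (c : ℝ) (hc : c ∈ Set.Ioo (0 : ℝ) 1) :
    ∃! p : ℝ, p ∈ Set.Ioo (0 : ℝ) 1 ∧
      p = c * (p + (1 - p) ^ ((2 * (d : ℝ)) / (2 * (d : ℝ) - 1))) := by
  obtain ⟨hc0, hc1⟩ := hc
  set a : ℝ := (2 * (d : ℝ)) / (2 * (d : ℝ) - 1) with ha_def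
  have hd1 : (1 : ℝ) ≤ (d : ℝ) := by exact_mod_cast hd
  have hden : (0 : ℝ) < 2 * (d : ℝ) - 1 := by linarith
  have ha : 0 < a := div_pos (by linarith) hden
  set h : ℝ → ℝ := fun p => c * (p + (1 - p) ^ a) - p with hh_def
  have hcont : ContinuousOn h (Set.Icc 0 1) := by
    apply ContinuousOn.sub _ continuousOn_id
    apply ContinuousOn.mul continuousOn_const
    apply ContinuousOn.add continuousOn_id
    exact (continuousOn_const.sub continuousOn_id).rpow_const
      (fun x _ => Or.inr ha.le)
  have h0 : h 0 = c := by simp [hh_def, Real.one_rpow]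
  have h1 : h 1 = c - 1 := by simp [hh_def, Real.zero_rpow ha.ne']
  have hmono : ∀ p q : ℝ, p ∈ Set.Ioo (0:ℝ) 1 → q ∈ Set.Ioo (0:ℝ) 1 → p < q →
      h q < h p := by
    intro p q hp hq hpq
    have hrp : (1 - q) ^ a ≤ (1 - p) ^ a :=
      Real.rpow_le_rpow (by linarith [hq.2]) (by linarith) ha.le
    have : c * ((1 - q) ^ a) ≤ c * ((1 - p) ^ a) :=
      mul_le_mul_of_nonneg_left hrp hc0.le
    simp only [hh_def]
    nlinarith
  have hex : ∃ p ∈ Set.Ioo (0:ℝ) 1, h p = 0 := by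
    have := intermediate_value_Ioo' (by norm_num : (0:ℝ) ≤ 1) hcont
    rw [h0, h1] at this
    have h0mem : (0:ℝ) ∈ Set.Ioo (c - 1) c := ⟨by linarith, hc0⟩
    obtain ⟨p, hp, hp0⟩ := this h0mem
    exact ⟨p, hp, hp0⟩
  obtain ⟨p, hp, hp0⟩ := hex
  refine ⟨p, ⟨hp, by simp only [hh_def] at hp0; linarith⟩, ?_⟩
  rintro q ⟨hq, hqeq⟩
  have hq0 : h q = 0 := by simp only [hh_def]; linarith
  by_contra hne
  rcases lt_or_gt_of_ne hne with hlt | hgt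
  · have := hmono q p hq hp hlt; rw [hp0, hq0] at this; linarith
  · have := hmono p q hp hq hgt; rw [hp0, hq0] at this; linarith
end

section
/- If c_d ∈ (0,1) is a sequence with d·c_d → 1 as d → ∞, and p_d solves p_d = c_d(p_d + (1−p_d)^{(d+1)/d}) in (0,1), then d·p_d → 1 as d → ∞. -/
open Filter

theorem crossover_asymptotics (c p : ℕ → ℝ)
    (hc : ∀ d, 1 ≤ d → c d ∈ Set.Ioo (0 : ℝ) 1)
    (hclim : Tendsto (fun d : ℕ => (d : ℝ) * c d) atTop (nhds 1))
    (hp : ∀ d, 1 ≤ d → p d ∈ Set.Ioo (0 : ℝ) 1)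
    (hpeq : ∀ d, 1 ≤ d → p d = c d * (p d + (1 - p d) ^ (((d : ℝ) + 1) / d))) :
    Tendsto (fun d : ℕ => (d : ℝ) * p d) atTop (nhds 1) := by
  have hdtop : Tendsto (fun d : ℕ => (d : ℝ)) atTop atTop := tendsto_natCast_atTop_atTop
  have hinv : Tendsto (fun d : ℕ => (1 : ℝ) / d) atTop (nhds 0) :=
    tendsto_one_div_atTop_nhds_zero_nat
  -- c tends to 0
  have hcz : Tendsto c atTop (nhds 0) := by
    have h1 : Tendsto (fun d : ℕ => ((d : ℝ) * c d) * (1 / (d : ℝ))) atTop (nhds (1 * 0)) :=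
      hclim.mul hinv
    rw [one_mul] at h1
    refine h1.congr' ?_
    filter_upwards [eventually_ge_atTop 1] with d hd1
    have hd0 : (d : ℝ) ≠ 0 := by positivity
    field_simp
  -- p ≤ c for d ≥ 1
  have hple : ∀ d, 1 ≤ d → p d ≤ c d := by
    intro d hd1
    obtain ⟨hp0, hp1⟩ := hp d hd1
    obtain ⟨hc0, hc1⟩ := hc d hd1
    have hq0 : 0 < 1 - p d := by linarith
    have hq1 : 1 - p d ≤ 1 := by linarith
    have hα : (1 : ℝ) ≤ ((d : ℝ) + 1) / d := by
      have hd0 : (0 : ℝ) < d := by exact_mod_cast hd1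
      rw [le_div_iff₀ hd0]; linarith
    have hle : (1 - p d) ^ (((d : ℝ) + 1) / d) ≤ 1 - p d := by
      have := Real.rpow_le_rpow_of_exponent_ge hq0 hq1 hα
      simpa [Real.rpow_one] using this
    have := hpeq d hd1
    nlinarith
  -- the root factor r d = (1 - c d) ^ (1/d)
  set r : ℕ → ℝ := fun d => (1 - c d) ^ ((1 : ℝ) / d) with hr_def
  have hr1 : Tendsto r atTop (nhds 1) := by
    have hhalf : Tendsto (fun d : ℕ => ((1 : ℝ) / 2) ^ ((1 : ℝ) / d)) atTop (nhds 1) := by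
      have hcont : ContinuousAt (fun x : ℝ => ((1 : ℝ) / 2) ^ x) 0 :=
        Real.continuousAt_const_rpow (by norm_num)
      have := hcont.tendsto.comp hinv
      simpa [Function.comp_def] using this
    have hev2 : ∀ᶠ d : ℕ in atTop, c d < 1 / 2 :=
      hcz.eventually_lt_const (by norm_num)
    refine tendsto_of_tendsto_of_tendsto_of_le_of_le' hhalf tendsto_const_nhds ?_ ?_
    · filter_upwards [hev2] with d hd
      exact Real.rpow_le_rpow (by norm_num) (by linarith) (by positivity)
    · filter_upwards [eventually_ge_atTop 1, hev2] with d hd1 hd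
      obtain ⟨hc0, hc1⟩ := hc d hd1
      exact Real.rpow_le_one (by linarith) (by linarith) (by positivity)
  -- the lower bound tends to 1
  have hlowlim : Tendsto (fun d : ℕ => (d : ℝ) * c d * r d / (1 - c d + c d * r d))
      atTop (nhds 1) := by
    have hden : Tendsto (fun d : ℕ => 1 - c d + c d * r d) atTop (nhds 1) := by
      have : Tendsto (fun d : ℕ => 1 - c d + c d * r d) atTop (nhds (1 - 0 + 0 * 1)) :=
        ((tendsto_const_nhds.sub hcz).add (hcz.mul hr1))
      simpa using this
    have := (hclim.mul hr1).div hden (by norm_num)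
    simpa [Pi.div_def] using this
  -- squeeze
  refine tendsto_of_tendsto_of_tendsto_of_le_of_le' hlowlim hclim ?_ ?_
  · filter_upwards [eventually_ge_atTop 1] with d hd1
    obtain ⟨hp0, hp1⟩ := hp d hd1
    obtain ⟨hc0, hc1⟩ := hc d hd1
    have hd0 : (0 : ℝ) < d := by exact_mod_cast hd1
    have hq0 : 0 < 1 - p d := by linarith
    have hr0 : 0 < r d := Real.rpow_pos_of_pos (by linarith) _
    have hrle1 : r d ≤ 1 := Real.rpow_le_one (by linarith) (by linarith) (by positivity)
    have hD0 : 0 < 1 - c d + c d * r d := by nlinarith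
    -- key: p d * (1 - c d + c d * r d) ≥ c d * r d
    have hsplit : (1 - p d) ^ (((d : ℝ) + 1) / d) = (1 - p d) * (1 - p d) ^ ((1 : ℝ) / d) := by
      have : ((d : ℝ) + 1) / d = 1 + 1 / d := by field_simp
      rw [this, Real.rpow_add hq0, Real.rpow_one]
    have hrq : r d ≤ (1 - p d) ^ ((1 : ℝ) / d) := by
      have hle := hple d hd1
      exact Real.rpow_le_rpow (by linarith) (by linarith) (by positivity)
    have heq := hpeq d hd1
    rw [hsplit] at heq
    have hkey : c d * r d ≤ p d * (1 - c d + c d * r d) := by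
      nlinarith [mul_nonneg (mul_pos hc0 hq0).le (sub_nonneg.mpr hrq)]
    rw [div_le_iff₀ hD0]
    nlinarith
  · filter_upwards [eventually_ge_atTop 1] with d hd1
    have hd0 : (0 : ℝ) ≤ d := by positivity
    exact mul_le_mul_of_nonneg_left (hple d hd1) hd0
end
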